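/- Let Ω be a measurable space, ν a σ-finite measure on Ω, f₀, f₁ : Ω → ℝ≥0∞ measurable, and suppose μ₀ := ν.withDensity f₀ and μ₁ := ν.withDensity f₁ are probability measures. Let φ* be a likelihood-ratio test with threshold l ∈ ℝ≥0∞ and randomization q ∈ [0,1]. Then for every measurable φ : Ω → ℝ with 0 ≤ φ(x) ≤ 1 for all x: if ∫ φ dμ₀ ≤ ∫ φ* dμ₀ then ∫ (1 − φ) dμ₁ ≥ ∫ (1 − φ*) dμ₁. -/

import Mathlib

open MeasureTheory
open scoped ENNReal

/-- Lemma A2 (Neyman–Pearson): among all tests whose type-I error does not exceed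
that of a likelihood-ratio test, the likelihood-ratio test minimizes type-II error. -/
theorem neyman_pearson {Ω : Type*} [MeasurableSpace Ω]
    (ν : Measure Ω) [SigmaFinite ν]
    (f₀ f₁ : Ω → ℝ≥0∞) (hf₀ : Measurable f₀) (hf₁ : Measurable f₁)
    (hμ₀ : IsProbabilityMeasure (ν.withDensity f₀))
    (hμ₁ : IsProbabilityMeasure (ν.withDensity f₁))
    (l : ℝ≥0∞) (q : ℝ) (hq : q ∈ Set.Icc (0 : ℝ) 1)
    (φstar : Ω → ℝ)
    (hφstar : ∀ x, φstar x =
      if l * f₀ x < f₁ x then 1 else if f₁ x = l * f₀ x then q else 0)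
    (φ : Ω → ℝ) (hφmeas : Measurable φ) (hφ01 : ∀ x, 0 ≤ φ x ∧ φ x ≤ 1)
    (h : ∫ x, φ x ∂(ν.withDensity f₀) ≤ ∫ x, φstar x ∂(ν.withDensity f₀)) :
    ∫ x, (1 - φ x) ∂(ν.withDensity f₁) ≥ ∫ x, (1 - φstar x) ∂(ν.withDensity f₁) := by
  have hφs_eq : φstar = fun x =>
      if l * f₀ x < f₁ x then (1:ℝ) else if f₁ x = l * f₀ x then q else 0 := funext hφstar
  have hφsmeas : Measurable φstar := by
    rw [hφs_eq]
    exact Measurable.ite (measurableSet_lt (hf₀.const_mul l) hf₁) measurable_const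
      (Measurable.ite (measurableSet_eq_fun hf₁ (hf₀.const_mul l)) measurable_const
        measurable_const)
  have hφs01 : ∀ x, 0 ≤ φstar x ∧ φstar x ≤ 1 := by
    intro x; rw [hφstar x]
    split_ifs
    · exact ⟨by norm_num, le_refl 1⟩
    · exact hq
    · exact ⟨le_refl 0, by norm_num⟩
  set G := fun x => ENNReal.ofReal (φ x) with hGdef
  set Gs := fun x => ENNReal.ofReal (φstar x) with hGsdef
  have hGmeas : Measurable G := hφmeas.ennreal_ofReal
  have hGsmeas : Measurable Gs := hφsmeas.ennreal_ofReal
  have hG1 : ∀ x, G x ≤ 1 := fun x => ENNReal.ofReal_le_one.mpr (hφ01 x).2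
  have hGs1 : ∀ x, Gs x ≤ 1 := fun x => ENNReal.ofReal_le_one.mpr (hφs01 x).2
  have htri : ∀ x, (l * f₀ x < f₁ x ∧ Gs x = 1) ∨ (f₁ x = l * f₀ x ∧ Gs x = ENNReal.ofReal q)
      ∨ (f₁ x < l * f₀ x ∧ Gs x = 0) := by
    intro x
    rcases lt_trichotomy (l * f₀ x) (f₁ x) with h1 | h1 | h1
    · exact Or.inl ⟨h1, by simp [hGsdef, hφstar x, if_pos h1]⟩
    · refine Or.inr (Or.inl ⟨h1.symm, ?_⟩)
      have hnlt : ¬ l * f₀ x < f₁ x := by rw [h1]; exact lt_irrefl _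
      simp only [hGsdef]; rw [hφstar x, if_neg hnlt, if_pos h1.symm]
    · refine Or.inr (Or.inr ⟨h1, ?_⟩)
      simp only [hGsdef]; rw [hφstar x, if_neg h1.asymm, if_neg (ne_of_lt h1), ENNReal.ofReal_zero]
  -- integral conversion
  have conv : ∀ (ψ : Ω → ℝ), Measurable ψ → (∀ x, 0 ≤ ψ x) → ∀ (f : Ω → ℝ≥0∞), Measurable f →
      ∫ x, ψ x ∂(ν.withDensity f) = (∫⁻ x, f x * ENNReal.ofReal (ψ x) ∂ν).toReal := by
    intro ψ hψ hψ0 f hf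
    rw [integral_eq_lintegral_of_nonneg_ae (ae_of_all _ hψ0) hψ.aestronglyMeasurable,
      lintegral_withDensity_eq_lintegral_mul ν hf hψ.ennreal_ofReal]
    rfl
  have hI1 : ∫⁻ x, f₁ x ∂ν = 1 := by
    have h1 := hμ₁.measure_univ
    rwa [withDensity_apply _ MeasurableSet.univ, setLIntegral_univ] at h1
  set A := ∫⁻ x, f₁ x * G x ∂ν with hAdef
  set As := ∫⁻ x, f₁ x * Gs x ∂ν with hAsdef
  set B := ∫⁻ x, f₀ x * G x ∂ν with hBdef
  set Bs := ∫⁻ x, f₀ x * Gs x ∂ν with hBsdef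
  have hA1 : A ≤ 1 := by
    rw [← hI1]
    exact lintegral_mono fun x => by
      calc f₁ x * G x ≤ f₁ x * 1 := mul_le_mul_of_nonneg_left (hG1 x) zero_le
        _ = f₁ x := mul_one _
  have hAs1 : As ≤ 1 := by
    rw [← hI1]
    exact lintegral_mono fun x => by
      calc f₁ x * Gs x ≤ f₁ x * 1 := mul_le_mul_of_nonneg_left (hGs1 x) zero_le
        _ = f₁ x := mul_one _
  have hB01 : ∫⁻ x, f₀ x ∂ν = 1 := by
    have h1 := hμ₀.measure_univ
    rwa [withDensity_apply _ MeasurableSet.univ, setLIntegral_univ] at h1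
  have hB1 : B ≤ 1 := by
    rw [← hB01]
    exact lintegral_mono fun x => by
      calc f₀ x * G x ≤ f₀ x * 1 := mul_le_mul_of_nonneg_left (hG1 x) zero_le
        _ = f₀ x := mul_one _
  have hBs1 : Bs ≤ 1 := by
    rw [← hB01]
    exact lintegral_mono fun x => by
      calc f₀ x * Gs x ≤ f₀ x * 1 := mul_le_mul_of_nonneg_left (hGs1 x) zero_le
        _ = f₀ x := mul_one _
  have hlBs1 : l * Bs ≤ 1 := by
    rw [hBsdef, ← lintegral_const_mul l (f := fun x => f₀ x * Gs x) (hf₀.mul hGsmeas), ← hI1]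
    refine lintegral_mono fun x => ?_
    rcases htri x with ⟨h1, h2⟩ | ⟨h1, h2⟩ | ⟨h1, h2⟩
    · rw [h2, mul_one]; exact h1.le
    · rw [h2, ← mul_assoc, ← h1]
      calc f₁ x * ENNReal.ofReal q ≤ f₁ x * 1 :=
            mul_le_mul_of_nonneg_left (ENNReal.ofReal_le_one.mpr hq.2) zero_le
        _ = f₁ x := mul_one _
    · rw [h2]; simp
  -- key pointwise inequality
  have key : ∀ x, f₁ x * G x + l * (f₀ x * Gs x) ≤ f₁ x * Gs x + l * (f₀ x * G x) := by
    intro x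
    rcases htri x with ⟨h1, h2⟩ | ⟨h1, h2⟩ | ⟨h1, h2⟩
    · rw [h2]
      set d := ENNReal.ofReal (1 - φ x) with hddef
      have hcd : G x + d = 1 := by
        rw [hGdef, hddef, ← ENNReal.ofReal_add (hφ01 x).1 (by linarith [(hφ01 x).2])]
        norm_num
      have e1 : l * (f₀ x * 1) = G x * (l * f₀ x) + d * (l * f₀ x) := by
        rw [mul_one, ← add_mul, hcd, one_mul]
      have e2 : f₁ x * 1 = G x * f₁ x + d * f₁ x := by
        rw [mul_one, ← add_mul, hcd, one_mul]
      rw [e1, e2]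
      calc f₁ x * G x + (G x * (l * f₀ x) + d * (l * f₀ x))
          ≤ f₁ x * G x + (G x * (l * f₀ x) + d * f₁ x) :=
            add_le_add_right (add_le_add_right (mul_le_mul_of_nonneg_left h1.le zero_le) _) _
        _ = G x * f₁ x + d * f₁ x + l * (f₀ x * G x) := by ring
    · rw [h2, h1]; exact le_of_eq (by ring)
    · rw [h2]
      calc f₁ x * G x + l * (f₀ x * 0) = f₁ x * G x := by simp
        _ ≤ (l * f₀ x) * G x := mul_le_mul_of_nonneg_right h1.le zero_le
        _ = f₁ x * 0 + l * (f₀ x * G x) := by ring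
  have hsum : A + l * Bs ≤ As + l * B := by
    have h1 : ∫⁻ x, (f₁ x * G x + l * (f₀ x * Gs x)) ∂ν
        ≤ ∫⁻ x, (f₁ x * Gs x + l * (f₀ x * G x)) ∂ν := lintegral_mono key
    rwa [lintegral_add_left (f := fun x => f₁ x * G x) (hf₁.mul hGmeas),
      lintegral_add_left (f := fun x => f₁ x * Gs x) (hf₁.mul hGsmeas),
      lintegral_const_mul l (f := fun x => f₀ x * Gs x) (hf₀.mul hGsmeas),
      lintegral_const_mul l (f := fun x => f₀ x * G x) (hf₀.mul hGmeas)] at h1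
  have hBBs : B ≤ Bs := by
    have h0 := h
    rw [conv φ hφmeas (fun x => (hφ01 x).1) f₀ hf₀,
      conv φstar hφsmeas (fun x => (hφs01 x).1) f₀ hf₀] at h0
    exact (ENNReal.toReal_le_toReal (ne_top_of_le_ne_top ENNReal.one_ne_top hB1)
      (ne_top_of_le_ne_top ENNReal.one_ne_top hBs1)).mp h0
  have hAAs : A ≤ As := by
    have h2 : A + l * Bs ≤ As + l * Bs := by
      calc A + l * Bs ≤ As + l * B := hsum
        _ ≤ As + l * Bs := by gcongr
    exact (ENNReal.add_le_add_iff_right (ne_top_of_le_ne_top ENNReal.one_ne_top hlBs1)).mp h2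
  -- conclude
  haveI := hμ₁
  have hintφ : Integrable φ (ν.withDensity f₁) :=
    ⟨hφmeas.aestronglyMeasurable, HasFiniteIntegral.of_bounded (C := 1)
      (ae_of_all _ fun x => by
        rw [Real.norm_eq_abs, abs_le]; exact ⟨by linarith [(hφ01 x).1], (hφ01 x).2⟩)⟩
  have hintφs : Integrable φstar (ν.withDensity f₁) :=
    ⟨hφsmeas.aestronglyMeasurable, HasFiniteIntegral.of_bounded (C := 1)
      (ae_of_all _ fun x => by
        rw [Real.norm_eq_abs, abs_le]; exact ⟨by linarith [(hφs01 x).1], (hφs01 x).2⟩)⟩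
  have hc1 : ∫ x, φ x ∂(ν.withDensity f₁) = A.toReal :=
    conv φ hφmeas (fun x => (hφ01 x).1) f₁ hf₁
  have hc2 : ∫ x, φstar x ∂(ν.withDensity f₁) = As.toReal :=
    conv φstar hφsmeas (fun x => (hφs01 x).1) f₁ hf₁
  have hAAs' : A.toReal ≤ As.toReal :=
    ENNReal.toReal_mono (ne_top_of_le_ne_top ENNReal.one_ne_top hAs1) hAAs
  rw [ge_iff_le, integral_sub (integrable_const 1) hintφ,
    integral_sub (integrable_const 1) hintφs, integral_const, probReal_univ]
  simp only [ENNReal.toReal_one, smul_eq_mul, mul_one]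
  rw [hc1, hc2]
  linarith
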